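/- Suppose [D,U] = λU and B(n,λ,U,D) = Σ_{k=0}^{n} C(n,k) (∏_{j=0}^{k-1}(D - U + jλI)) U^{n-k} (products ordered left to right in increasing j). If V ∈ A satisfies (D + jλI)V = 0 for some j with 0 ≤ j ≤ n-1, then B(n,λ,U,D) · V = 0. -/

import Mathlib

/-- The binomial-type combination `B(n, λ, U, D)`, with the products ordered
left to right in increasing `j`. -/
noncomputable def binomB {K A : Type*} [Field K] [Ring A] [Algebra K A]
    (n : ℕ) (l : K) (U D : A) : A :=
  ∑ k ∈ Finset.range (n + 1),
    n.choose k •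
      (((List.range k).map (fun j : ℕ => D - U + ((j : K) * l) • (1 : A))).prod * U ^ (n - k))

lemma step_comm {K A : Type*} [Field K] [Ring A] [Algebra K A]
    (l : K) (U D : A) (h : D * U - U * D = l • U) (j : ℕ) :
    (D - U + ((j : K) * l) • (1 : A)) * U
      = U * (D - U + (((j + 1 : ℕ) : K) * l) • (1 : A)) := by
  have hDU : D * U = l • U + U * D := by linear_combination (norm := noncomm_ring) h
  push_cast
  simp only [add_mul, sub_mul, mul_add, mul_sub, smul_mul_assoc, mul_smul_comm, one_mul,
    mul_one, hDU, add_smul]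
  abel

lemma pow_comm' {K A : Type*} [Field K] [Ring A] [Algebra K A]
    (l : K) (U D : A) (h : D * U - U * D = l • U) (j m : ℕ) :
    (D - U + ((j : K) * l) • (1 : A)) * U ^ m
      = U ^ m * (D - U + (((j + m : ℕ) : K) * l) • (1 : A)) := by
  induction m generalizing j with
  | zero => simp
  | succ m ih =>
      rw [pow_succ, ← mul_assoc, ih, mul_assoc, step_comm l U D h, ← mul_assoc, ← pow_succ]
      congr 3

lemma binomB_succ {K A : Type*} [Field K] [Ring A] [Algebra K A]
    (l : K) (U D : A) (h : D * U - U * D = l • U) (n : ℕ) :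
    binomB (n + 1) l U D = binomB n l U D * (D + ((n : K) * l) • (1 : A)) := by
  set C : ℕ → A := fun j : ℕ => D - U + ((j : K) * l) • (1 : A) with hC
  set P : ℕ → A := fun k => ((List.range k).map C).prod with hPdef
  have hP0 : P 0 = 1 := by simp [hPdef]
  have hPsucc : ∀ k, P (k + 1) = P k * C k := by
    intro k; simp [hPdef, List.range_succ]
  have lhs : binomB (n + 1) l U D
      = (∑ k ∈ Finset.range (n + 1), n.choose k • (P (k + 1) * U ^ (n - k)))
        + ((∑ k ∈ Finset.range (n + 1), n.choose (k + 1) • (P (k + 1) * U ^ (n - k)))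
            + n.choose 0 • (P 0 * U ^ (n + 1 - 0))) := by
    rw [binomB, Finset.sum_range_succ'
      (fun k => (n + 1).choose k • (P k * U ^ (n + 1 - k))) (n + 1)]
    simp only [Nat.succ_sub_succ, Nat.choose_succ_succ, add_smul, Finset.sum_add_distrib,
      Nat.choose_zero_right, one_smul, add_assoc]
  have second : (∑ k ∈ Finset.range (n + 1), n.choose (k + 1) • (P (k + 1) * U ^ (n - k)))
        + n.choose 0 • (P 0 * U ^ (n + 1 - 0))
      = ∑ k ∈ Finset.range (n + 1), n.choose k • (P k * U ^ (n + 1 - k)) := by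
    have e1 := Finset.sum_range_succ'
      (fun k => n.choose k • (P k * U ^ (n + 1 - k))) (n + 1)
    have e2 := Finset.sum_range_succ
      (fun k => n.choose k • (P k * U ^ (n + 1 - k))) (n + 1)
    simp only [Nat.succ_sub_succ] at e1
    rw [e1] at e2
    rw [e2]
    simp
  rw [lhs, second, binomB, Finset.sum_mul, ← Finset.sum_add_distrib]
  apply Finset.sum_congr rfl
  intro k hk
  have hk' : k ≤ n := Nat.lt_succ_iff.mp (Finset.mem_range.mp hk)
  rw [smul_mul_assoc, ← smul_add]
  congr 1
  have hQ : D + ((n : K) * l) • (1 : A) = U + C n := by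
    rw [hC]; show _ = U + (D - U + ((n : K) * l) • (1 : A)); abel
  have hcp : C k * U ^ (n - k) = U ^ (n - k) * C n := by
    have hcp0 := pow_comm' l U D h k (n - k)
    rw [show k + (n - k) = n by omega] at hcp0
    exact hcp0
  rw [hQ, mul_add, hPsucc, mul_assoc (P k), hcp,
    show n + 1 - k = (n - k) + 1 by omega, pow_succ]
  simp only [mul_assoc]
  rw [add_comm]

lemma binomB_eq_prod {K A : Type*} [Field K] [Ring A] [Algebra K A]
    (l : K) (U D : A) (h : D * U - U * D = l • U) (n : ℕ) :
    binomB n l U D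
      = ((List.range n).map (fun j : ℕ => D + ((j : K) * l) • (1 : A))).prod := by
  induction n with
  | zero => simp [binomB]
  | succ n ih =>
      rw [binomB_succ l U D h, ih, List.range_succ]
      simp

theorem binomB_mul_eq_zero
    {K A : Type*} [Field K] [CharZero K] [Ring A] [Algebra K A]
    (l : K) (U D V : A) (h : D * U - U * D = l • U)
    (n j : ℕ) (hn : 1 ≤ n) (hj : j ≤ n - 1)
    (hV : (D + ((j : K) * l) • (1 : A)) * V = 0) :
    binomB n l U D * V = 0 := by
  have hjn : j < n := by omega
  rw [binomB_eq_prod l U D h n]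
  set Q : ℕ → A := fun i => D + ((i : K) * l) • (1 : A) with hQ
  have hcomm : ∀ a b : ℕ, Q a * Q b = Q b * Q a := by
    intro a b
    simp only [hQ, mul_add, add_mul, smul_mul_assoc, mul_smul_comm, one_mul, mul_one,
      smul_smul, mul_comm ((a : K) * l) ((b : K) * l)]
    module
  have key : ∀ m, j < m → ∃ W : A, ((List.range m).map Q).prod = W * Q j := by
    intro m hm
    induction m with
    | zero => omega
    | succ m ih =>
        rw [List.range_succ, List.map_append, List.prod_append]
        by_cases hjm : j < m
        · obtain ⟨W, hW⟩ := ih hjm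
          exact ⟨W * Q m, by rw [hW]; simp [mul_assoc, hcomm j m]⟩
        · have : j = m := by omega
          subst this
          exact ⟨((List.range j).map Q).prod, by simp⟩
  obtain ⟨W, hW⟩ := key n hjn
  rw [hW, mul_assoc, hV, mul_zero]
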